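/- Stability of the hook product h↓ (Lemma in Appendix C). Let λ and μ be partitions and let m₁, m₂ be integers with m₁, m₂ ≥ |λ| + |μ|. For an integer m ≥ |λ| + |μ| set Λ*(m) = (λ + δ^m) ∪ μ, Λ⊛(m) = (λ + δ^{m+1}) ∪ μ, and h↓(m) = ∏_{(i,j) bosonic for (Λ*(m),Λ⊛(m))} (1 − q^{Λ⊛(m)_i − j} t^{(Λ*(m))'_j − i + 1}) in ℤ[q,t]. Then h↓(m₁) = h↓(m₂); i.e. h↓_Λ(q,t) does not depend on m in the stable sector. -/

import Mathlib

noncomputable section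

namespace DoubleMacdonald

/-- A partition, encoded as a weakly decreasing function `ℕ → ℕ` (0-indexed: `f 0 = λ₁`)
with finitely many nonzero values. -/
def IsPartition (f : ℕ → ℕ) : Prop :=
  (∀ ⦃i j : ℕ⦄, i ≤ j → f j ≤ f i) ∧ ∃ N, ∀ i, N ≤ i → f i = 0

/-- The size `|λ| = Σᵢ λᵢ` of a partition. -/
def psize (f : ℕ → ℕ) : ℕ := ∑ᶠ i, f i

/-- The number `ℓ(λ)` of nonzero parts of a partition. -/
def plen (f : ℕ → ℕ) : ℕ := Nat.card {i : ℕ | 1 ≤ f i}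

/-- The conjugate partition: `λ'ⱼ = #{i : λᵢ ≥ j}` (0-indexed: `conj f j = λ'_{j+1}`). -/
def conj (f : ℕ → ℕ) : ℕ → ℕ := fun j => Nat.card {i : ℕ | j + 1 ≤ f i}

/-- The staircase partition `δ^m = (m-1, m-2, …, 1, 0)`. -/
def delta (m : ℕ) : ℕ → ℕ := fun i => m - 1 - i

/-- Componentwise sum of partitions. -/
def addF (f g : ℕ → ℕ) : ℕ → ℕ := fun i => f i + g i

/-- Union `λ ∪ μ` of partitions: the weakly decreasing rearrangement of the combined
multiset of parts, defined via `(λ ∪ μ)' = λ' + μ'`. -/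
def unionF (f g : ℕ → ℕ) : ℕ → ℕ := conj (addF (conj f) (conj g))

/-- Partial sum `λ₁ + ⋯ + λ_k`. -/
def psum (f : ℕ → ℕ) (k : ℕ) : ℕ := ∑ i ∈ Finset.range k, f i

/-- The statistic `n(λ) = Σᵢ (i-1) λᵢ`. -/
def nstat (f : ℕ → ℕ) : ℕ := ∑ᶠ i, i * f i

/-- The (extended) dominance order: `f ⪰ g` iff all partial sums of `f` dominate those of `g`. -/
def Dominates (f g : ℕ → ℕ) : Prop := ∀ k, psum g k ≤ psum f k

open MvPolynomial

/-- The indeterminate `q` in `ℤ[q,t]`. -/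
def qp : MvPolynomial (Fin 2) ℤ := X 0

/-- The indeterminate `t` in `ℤ[q,t]`. -/
def tp : MvPolynomial (Fin 2) ℤ := X 1

/-- A cell `(i,j)` (0-indexed) of `Λ*` is bosonic for the pair `(Λ*, Λ⊛)` if it is NOT
the case that both `Λ⊛ᵢ = Λ*ᵢ + 1` and `(Λ⊛)'ⱼ = (Λ*)'ⱼ + 1`. -/
def Bosonic (L Ls : ℕ → ℕ) (i j : ℕ) : Prop :=
  ¬(Ls i = L i + 1 ∧ conj Ls j = conj L j + 1)

instance (L Ls : ℕ → ℕ) (i j : ℕ) : Decidable (Bosonic L Ls i j) := by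
  unfold Bosonic; infer_instance

/-- The hook product `h↓(q,t) = ∏_{s bosonic} (1 − q^{a_{Λ⊛}(s)} t^{l_{Λ*}(s)+1})`
over the bosonic cells of `Λ*`, as an element of `ℤ[q,t]`. -/
def hdown (L Ls : ℕ → ℕ) : MvPolynomial (Fin 2) ℤ :=
  ∏ i ∈ Finset.range (plen L), ∏ j ∈ Finset.range (L i),
    if Bosonic L Ls i j then (1 - qp ^ (Ls i - (j + 1)) * tp ^ (conj L j - i)) else 1

/-- The hook product `h↓(m)` attached to partitions `λ, μ` and an integer `m`, built from
`Λ*(m) = (λ + δ^m) ∪ μ` and `Λ⊛(m) = (λ + δ^{m+1}) ∪ μ`. -/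
def hdownOf (f g : ℕ → ℕ) (m : ℕ) : MvPolynomial (Fin 2) ℤ :=
  hdown (unionF (addF f (delta m)) g) (unionF (addF f (delta (m+1))) g)

lemma nat_eq_of_lt_iff {a b : ℕ} (h : ∀ k, k < a ↔ k < b) : a = b := by
  rcases lt_trichotomy a b with h'|h'|h'
  · exact absurd ((h a).mpr h') (lt_irrefl a)
  · exact h'
  · exact absurd ((h b).mp h') (lt_irrefl b)

lemma mem_iff_lt_card (S : Set ℕ) (hS : ∀ a b : ℕ, a ≤ b → b ∈ S → a ∈ S)
    (hfin : S.Finite) (i : ℕ) : i ∈ S ↔ i < Nat.card S := by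
  rw [Nat.card_coe_set_eq]
  constructor
  · intro hi
    have hsub : Set.Iic i ⊆ S := fun a ha => hS a i ha hi
    have := Set.ncard_le_ncard hsub hfin
    have hIic : (Set.Iic i).ncard = i + 1 := by
      rw [show Set.Iic i = ↑(Finset.Iic i) by simp, Set.ncard_coe_finset]; simp
    omega
  · intro hi
    by_contra hni
    have hsub : S ⊆ Set.Iio i := by
      intro b hb
      simp only [Set.mem_Iio]
      by_contra hbi
      push_neg at hbi
      exact hni (hS i b hbi hb)
    have := Set.ncard_le_ncard hsub (Set.finite_Iio i)
    have hIio : (Set.Iio i).ncard = i := by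
      rw [show Set.Iio i = ↑(Finset.Iio i) by simp, Set.ncard_coe_finset]; simp
    omega

lemma conj_galois {h : ℕ → ℕ} (hp : IsPartition h) (i j : ℕ) :
    i < conj h j ↔ j < h i := by
  obtain ⟨N, hN⟩ := hp.2
  have hfin : ({i : ℕ | j + 1 ≤ h i} : Set ℕ).Finite := by
    apply Set.Finite.subset (Set.finite_Iio N)
    intro k hk
    simp only [Set.mem_setOf_eq] at hk
    simp only [Set.mem_Iio]
    by_contra hc
    have := hN k (by omega)
    omega
  have hlow : ∀ a b : ℕ, a ≤ b → b ∈ {i : ℕ | j + 1 ≤ h i} → a ∈ {i : ℕ | j + 1 ≤ h i} := by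
    intro a b hab hb
    simp only [Set.mem_setOf_eq] at *
    exact le_trans hb (hp.1 hab)
  have := (mem_iff_lt_card _ hlow hfin i).symm
  simpa [conj] using this.trans (by simp [Set.mem_setOf_eq])

lemma plen_eq_conj_zero (h : ℕ → ℕ) : plen h = conj h 0 := rfl

lemma conj_isPartition {h : ℕ → ℕ} (hp : IsPartition h) : IsPartition (conj h) := by
  constructor
  · intro j j' hjj'
    by_contra hc
    push_neg at hc
    have h2 := (conj_galois hp (conj h j) j').mp hc
    have h3 : ¬ (conj h j < conj h j) := lt_irrefl _
    rw [conj_galois hp] at h3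
    omega
  · refine ⟨h 0, fun j hj => ?_⟩
    by_contra hc
    have : 0 < conj h j := by omega
    have := (conj_galois hp 0 j).mp this
    omega

lemma conj_conj {h : ℕ → ℕ} (hp : IsPartition h) : conj (conj h) = h := by
  funext i
  apply nat_eq_of_lt_iff
  intro k
  rw [conj_galois (conj_isPartition hp), conj_galois hp]

lemma part_zero_of_plen_le {h : ℕ → ℕ} (hp : IsPartition h) {i : ℕ} (hi : plen h ≤ i) :
    h i = 0 := by
  by_contra hc
  have : 0 < h i := by omega
  have := (conj_galois hp i 0).mpr this
  rw [← plen_eq_conj_zero] at this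
  omega

section Main

variable {f g : ℕ → ℕ}

lemma f_pos_of_lt_plen (hf : IsPartition f) {i : ℕ} (hi : i < plen f) : 1 ≤ f i := by
  rw [plen_eq_conj_zero] at hi
  exact (conj_galois hf i 0).mp hi

lemma addF_isPartition (hf : IsPartition f) (hg : IsPartition g) :
    IsPartition (addF f g) := by
  obtain ⟨N, hN⟩ := hf.2
  obtain ⟨N', hN'⟩ := hg.2
  refine ⟨fun i j hij => ?_, ⟨max N N', fun i hi => ?_⟩⟩
  · have := hf.1 hij; have := hg.1 hij
    simp only [addF]; omega
  · have := hN i (by omega); have := hN' i (by omega)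
    simp only [addF]; omega

lemma addF_delta_isPartition (hf : IsPartition f) (m : ℕ) :
    IsPartition (addF f (delta m)) := by
  obtain ⟨N, hN⟩ := hf.2
  refine ⟨fun i j hij => ?_, ⟨max N m, fun i hi => ?_⟩⟩
  · have := hf.1 hij
    simp only [addF, delta]; omega
  · have := hN i (by omega)
    simp only [addF, delta]; omega

/-- A1 : Galois for f + δ^m -/
lemma A1 (hf : IsPartition f) (m i j : ℕ) :
    i < conj (addF f (delta m)) j ↔ j < f i + (m - 1 - i) :=
  conj_galois (addF_delta_isPartition hf m) i j

/-- A2 : staircase columns -/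
lemma A2 (hf : IsPartition f) {m j : ℕ} (hm : plen f ≤ m) (hj : j < m - plen f) :
    conj (addF f (delta m)) j = m - 1 - j := by
  apply nat_eq_of_lt_iff
  intro k
  rw [A1 hf]
  rcases lt_or_ge k (plen f) with hk | hk
  · have := f_pos_of_lt_plen hf hk
    omega
  · have := part_zero_of_plen_le hf hk
    omega

/-- A3 : column shift -/
lemma A3 (hf : IsPartition f) {m : ℕ} (hm : plen f ≤ m) (j : ℕ) :
    conj (addF f (delta (m+1))) (j+1) = conj (addF f (delta m)) j := by
  apply nat_eq_of_lt_iff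
  intro k
  rw [A1 hf, A1 hf]
  rcases lt_or_ge k m with hk | hk
  · omega
  · have := part_zero_of_plen_le hf (le_trans hm hk)
    omega

/-- A4 : far columns are short -/
lemma A4 (hf : IsPartition f) {m j : ℕ} (hj : m - plen f ≤ j + 1) :
    conj (addF f (delta m)) j ≤ plen f := by
  by_contra hc
  push_neg at hc
  have := (A1 hf m (plen f) j).mp hc
  have := part_zero_of_plen_le hf (le_refl (plen f))
  omega

lemma cg_zero (hg : IsPartition g) {j : ℕ} (hj : g 0 ≤ j) : conj g j = 0 := by
  by_contra hc
  have : 0 < conj g j := by omega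
  have := (conj_galois hg 0 j).mp this
  omega

lemma W_isPartition (hf : IsPartition f) (hg : IsPartition g) (m : ℕ) :
    IsPartition (addF (conj (addF f (delta m))) (conj g)) :=
  addF_isPartition (conj_isPartition (addF_delta_isPartition hf m)) (conj_isPartition hg)

lemma Phi_isPartition (hf : IsPartition f) (hg : IsPartition g) (m : ℕ) :
    IsPartition (unionF (addF f (delta m)) g) :=
  conj_isPartition (W_isPartition hf hg m)

/-- master relation -/
lemma MR (hf : IsPartition f) (hg : IsPartition g) (m i k : ℕ) :
    k < unionF (addF f (delta m)) g i ↔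
      i < conj (addF f (delta m)) k + conj g k :=
  conj_galois (W_isPartition hf hg m) k i

/-- conjugate of Φ -/
lemma CJ (hf : IsPartition f) (hg : IsPartition g) (m j : ℕ) :
    conj (unionF (addF f (delta m)) g) j = conj (addF f (delta m)) j + conj g j := by
  have := conj_conj (W_isPartition hf hg m)
  calc conj (unionF (addF f (delta m)) g) j
      = conj (conj (addF (conj (addF f (delta m))) (conj g))) j := rfl
    _ = _ := by rw [this]; rfl

end Main
section Main2

variable {f g : ℕ → ℕ}

/-- P1 : top rows of Λ* -/
lemma P1 (hf : IsPartition f) (hg : IsPartition g) {m i : ℕ}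
    (hm : plen f + g 0 ≤ m) (hi : i < plen f) :
    unionF (addF f (delta m)) g i = f i + (m - 1 - i) := by
  apply nat_eq_of_lt_iff
  intro k
  rw [MR hf hg]
  constructor
  · intro hk
    by_contra hc
    push_neg at hc
    have h1 : conj (addF f (delta m)) k ≤ i := by
      by_contra h1
      push_neg at h1
      have := (A1 hf m i k).mp h1
      omega
    have hfi := f_pos_of_lt_plen hf hi
    have h2 : conj g k = 0 := cg_zero hg (by omega)
    omega
  · intro hk
    have := (A1 hf m i k).mpr hk
    omega

/-- P2 : bottom rows shift -/
lemma P2 (hf : IsPartition f) (hg : IsPartition g) {m i : ℕ}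
    (hm : plen f + g 0 ≤ m) (hi : plen f ≤ i) :
    unionF (addF f (delta (m+1))) g (i+1) = unionF (addF f (delta m)) g i := by
  apply nat_eq_of_lt_iff
  intro k
  rw [MR hf hg, MR hf hg]
  rcases lt_or_ge k (m - plen f) with hk | hk
  · rw [A2 hf (by omega) hk, A2 hf (by omega : plen f ≤ m + 1) (by omega : k < m + 1 - plen f)]
    omega
  · have h0 : conj g k = 0 := cg_zero hg (by omega)
    have h1 := A4 hf (m := m) (j := k) (by omega)
    have h2 := A4 hf (m := m+1) (j := k) (by omega)
    omega

/-- P3 : row K of Λ⊛ -/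
lemma P3 (hf : IsPartition f) (hg : IsPartition g) {m : ℕ}
    (hm : plen f + g 0 ≤ m) :
    unionF (addF f (delta (m+1))) g (plen f) = m - plen f := by
  apply nat_eq_of_lt_iff
  intro k
  rw [MR hf hg]
  rcases lt_or_ge k (m - plen f) with hk | hk
  · rw [A2 hf (by omega : plen f ≤ m + 1) (by omega : k < m + 1 - plen f)]
    omega
  · have h0 : conj g k = 0 := cg_zero hg (by omega)
    have h1 := A4 hf (m := m+1) (j := k) (by omega)
    omega

/-- row K of Λ* is at most m - K -/
lemma PhiK_le (hf : IsPartition f) (hg : IsPartition g) {m : ℕ}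
    (hm : plen f + g 0 ≤ m) :
    unionF (addF f (delta m)) g (plen f) ≤ m - plen f := by
  by_contra hc
  push_neg at hc
  have := (MR hf hg m (plen f) (m - plen f)).mp hc
  have h0 : conj g (m - plen f) = 0 := cg_zero hg (by omega)
  have h1 := A4 hf (m := m) (j := m - plen f) (by omega)
  omega

lemma plen_Phi_le (hf : IsPartition f) (hg : IsPartition g) {m : ℕ}
    (hm : plen f ≤ m) :
    plen (unionF (addF f (delta m)) g) ≤ m + conj g 0 := by
  rw [plen_eq_conj_zero, CJ hf hg]
  have h1 : conj (addF f (delta m)) 0 ≤ m := by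
    by_contra hc
    push_neg at hc
    have := (A1 hf m m 0).mp hc
    have := part_zero_of_plen_le hf hm
    omega
  omega

end Main2


section Cells

/-- the factor attached to a single cell -/
def cellF (L Ls : ℕ → ℕ) (i j : ℕ) : MvPolynomial (Fin 2) ℤ :=
  if Bosonic L Ls i j then (1 - qp ^ (Ls i - (j + 1)) * tp ^ (conj L j - i)) else 1

lemma hdown_eq (L Ls : ℕ → ℕ) :
    hdown L Ls = ∏ i ∈ Finset.range (plen L), ∏ j ∈ Finset.range (L i), cellF L Ls i j := rfl

lemma hdown_eq_range {L : ℕ → ℕ} (Ls : ℕ → ℕ) (hL : IsPartition L) {N : ℕ} (hN : plen L ≤ N) :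
    hdown L Ls = ∏ i ∈ Finset.range N, ∏ j ∈ Finset.range (L i), cellF L Ls i j := by
  rw [hdown_eq]
  apply Finset.prod_subset (Finset.range_subset_range.mpr hN)
  intro i _ hi
  simp only [Finset.mem_range, not_lt] at hi
  rw [part_zero_of_plen_le hL hi]
  simp

lemma cellF_eq_one {L Ls : ℕ → ℕ} {i j : ℕ}
    (h1 : Ls i = L i + 1) (h2 : conj Ls j = conj L j + 1) : cellF L Ls i j = 1 := by
  have hb : ¬ Bosonic L Ls i j := by
    unfold Bosonic
    exact not_not_intro ⟨h1, h2⟩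
  unfold cellF
  rw [if_neg hb]

lemma cellF_congr {L Ls L' Ls' : ℕ → ℕ} {i j i' j' : ℕ}
    (hbos : Bosonic L Ls i j ↔ Bosonic L' Ls' i' j')
    (hq : Bosonic L Ls i j → Ls i - (j+1) = Ls' i' - (j'+1))
    (ht : Bosonic L Ls i j → conj L j - i = conj L' j' - i') :
    cellF L Ls i j = cellF L' Ls' i' j' := by
  unfold cellF
  by_cases hb : Bosonic L Ls i j
  · rw [if_pos hb, if_pos (hbos.mp hb), hq hb, ht hb]
  · rw [if_neg hb, if_neg (fun h => hb (hbos.mpr h))]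

end Cells


lemma prod_shift {M : Type*} [CommMonoid M] (R0 R1 : ℕ → M) (K N : ℕ) (hKN : K ≤ N)
    (htop : ∀ i, i < K → R1 i = R0 i) (hK1 : R1 K = 1)
    (hbot : ∀ i, K ≤ i → R1 (i+1) = R0 i) :
    ∏ i ∈ Finset.range N, R0 i = ∏ i ∈ Finset.range (N+1), R1 i := by
  rw [Finset.range_eq_Ico, Finset.range_eq_Ico]
  rw [← Finset.prod_Ico_consecutive R0 (Nat.zero_le K) hKN,
    ← Finset.prod_Ico_consecutive R1 (Nat.zero_le K) (by omega : K ≤ N + 1)]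
  congr 1
  · apply Finset.prod_congr rfl
    intro i hi
    simp only [Finset.mem_Ico] at hi
    exact (htop i hi.2).symm
  · rw [Finset.prod_eq_prod_Ico_succ_bot (by omega : K < N + 1) R1, hK1, one_mul,
      ← Finset.prod_Ico_add' R1 K N 1]
    apply Finset.prod_congr rfl
    intro i hi
    simp only [Finset.mem_Ico] at hi
    exact (hbot i hi.1).symm

section Step

variable {f g : ℕ → ℕ}

/-- The key step: `h↓(m) = h↓(m+1)` in the stable range. -/
lemma hdownOf_step (hf : IsPartition f) (hg : IsPartition g) {m : ℕ}
    (hm : plen f + g 0 ≤ m) :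
    hdownOf f g m = hdownOf f g (m+1) := by
  set K := plen f with hK
  set Φ0 := unionF (addF f (delta m)) g with hΦ0
  set Φ1 := unionF (addF f (delta (m+1))) g with hΦ1
  set Φ2 := unionF (addF f (delta (m+2))) g with hΦ2
  have hm1 : plen f + g 0 ≤ m + 1 := by omega
  have hm2 : plen f + g 0 ≤ m + 2 := by omega
  have hKm : K ≤ m := by omega
  -- conjugates
  have cj0 : ∀ j, conj Φ0 j = conj (addF f (delta m)) j + conj g j := CJ hf hg m
  have cj1 : ∀ j, conj Φ1 j = conj (addF f (delta (m+1))) j + conj g j := CJ hf hg (m+1)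
  have cj2 : ∀ j, conj Φ2 j = conj (addF f (delta (m+2))) j + conj g j := CJ hf hg (m+2)
  -- column growth facts
  have cg01 : ∀ j, j < m - K → conj Φ1 j = conj Φ0 j + 1 := by
    intro j hj
    rw [cj0, cj1, A2 hf hKm hj, A2 hf (by omega : plen f ≤ m + 1) (by omega : j < m + 1 - plen f)]
    omega
  have cg12 : ∀ j, j < m + 1 - K → conj Φ2 j = conj Φ1 j + 1 := by
    intro j hj
    rw [cj1, cj2, A2 hf (by omega : plen f ≤ m + 1) (by omega : j < m + 1 - plen f),
      A2 hf (by omega : plen f ≤ m + 2) (by omega : j < m + 2 - plen f)]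
    omega
  have cgshift : ∀ j, (conj Φ1 j = conj Φ0 j + 1) ↔ (conj Φ2 (j+1) = conj Φ1 (j+1) + 1) := by
    intro j
    rw [cj0, cj1, cj1, cj2, A3 hf (by omega : plen f ≤ m + 1) j, A3 hf hKm j]
    omega
  have texp : ∀ j, ¬(conj Φ1 j = conj Φ0 j + 1) → conj Φ1 (j+1) = conj Φ0 j := by
    intro j hj
    have hjM : m - K ≤ j := by
      by_contra hc
      exact hj (cg01 j (by omega))
    rw [cj0, cj1, A3 hf hKm j, cg_zero hg (by omega : g 0 ≤ j),
      cg_zero hg (by omega : g 0 ≤ j + 1)]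
  -- row lemmas
  have row_top : ∀ i, i < K →
      (∏ j ∈ Finset.range (Φ1 i), cellF Φ1 Φ2 i j)
        = ∏ j ∈ Finset.range (Φ0 i), cellF Φ0 Φ1 i j := by
    intro i hi
    have e0 : Φ0 i = f i + (m - 1 - i) := P1 hf hg hm hi
    have e1 : Φ1 i = f i + (m + 1 - 1 - i) := P1 hf hg hm1 hi
    have e2 : Φ2 i = f i + (m + 2 - 1 - i) := P1 hf hg hm2 hi
    have h10 : Φ1 i = Φ0 i + 1 := by omega
    have h21 : Φ2 i = Φ1 i + 1 := by omega
    rw [h10, Finset.prod_range_succ']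
    have hF10 : cellF Φ1 Φ2 i 0 = 1 :=
      cellF_eq_one h21 (cg12 0 (by omega))
    rw [hF10, mul_one]
    apply Finset.prod_congr rfl
    intro j hj
    apply cellF_congr
    · unfold Bosonic
      rw [not_iff_not]
      constructor
      · rintro ⟨-, h⟩
        exact ⟨h10, (cgshift j).mpr h⟩
      · rintro ⟨-, h⟩
        exact ⟨h21, (cgshift j).mp h⟩
    · intro _; omega
    · intro hb
      have hnc : ¬(conj Φ1 j = conj Φ0 j + 1) := by
        intro h
        exact hb ⟨h21, (cgshift j).mp h⟩
      rw [texp j hnc]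
  have row_K : (∏ j ∈ Finset.range (Φ1 K), cellF Φ1 Φ2 K j) = 1 := by
    have eK : Φ1 K = m - K := P3 hf hg hm
    have eK2 : Φ2 K = m + 1 - K := P3 hf hg hm1
    apply Finset.prod_eq_one
    intro j hj
    rw [eK] at hj
    simp only [Finset.mem_range] at hj
    exact cellF_eq_one (by omega) (cg12 j (by omega))
  have row_bot : ∀ i, K ≤ i →
      (∏ j ∈ Finset.range (Φ1 (i+1)), cellF Φ1 Φ2 (i+1) j)
        = ∏ j ∈ Finset.range (Φ0 i), cellF Φ0 Φ1 i j := by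
    intro i hi
    have e1 : Φ1 (i+1) = Φ0 i := P2 hf hg hm hi
    have e2 : Φ2 (i+1) = Φ1 i := P2 hf hg hm1 hi
    rw [e1]
    apply Finset.prod_congr rfl
    intro j hj
    simp only [Finset.mem_range] at hj
    have hjM : j < m - K := by
      have h1 : Φ0 i ≤ Φ0 K := (Phi_isPartition hf hg m).1 hi
      have h2 : Φ0 K ≤ m - K := PhiK_le hf hg hm
      omega
    have hc01 := cg01 j hjM
    have hc12 := cg12 j (by omega)
    apply cellF_congr
    · unfold Bosonic
      rw [not_iff_not, e1, e2]
      constructor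
      · rintro ⟨h, -⟩; exact ⟨h, by omega⟩
      · rintro ⟨h, -⟩; exact ⟨h, by omega⟩
    · intro _; rw [e2]
    · intro _; rw [hc01]; omega
  -- assembly
  have hp0 : IsPartition Φ0 := Phi_isPartition hf hg m
  have hp1 : IsPartition Φ1 := Phi_isPartition hf hg (m+1)
  have hplen0 : plen Φ0 ≤ m + conj g 0 := plen_Phi_le hf hg hKm
  have hplen1 : plen Φ1 ≤ m + conj g 0 + 1 := by
    have h' : plen Φ1 ≤ m + 1 + conj g 0 := plen_Phi_le hf hg (by omega : plen f ≤ m + 1)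
    omega
  show hdown Φ0 Φ1 = hdown Φ1 Φ2
  rw [hdown_eq_range Φ1 hp0 hplen0, hdown_eq_range Φ2 hp1 hplen1]
  exact prod_shift _ _ K (m + conj g 0) (by omega) row_top row_K row_bot
end Step

section Glue

variable {f g : ℕ → ℕ}

lemma plen_le_psize (hf : IsPartition f) : plen f ≤ psize f := by
  obtain ⟨N, hN⟩ := hf.2
  have hsupp : Function.support f ⊆ ↑(Finset.range (max N (plen f))) := by
    intro i hi
    simp only [Function.mem_support] at hi
    simp only [Finset.coe_range, Set.mem_Iio]
    by_contra hc
    exact hi (hN i (by omega))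
  rw [psize, finsum_eq_sum_of_support_subset f hsupp]
  calc plen f = ∑ _i ∈ Finset.range (plen f), 1 := by simp
    _ ≤ ∑ i ∈ Finset.range (plen f), f i :=
        Finset.sum_le_sum (fun i hi => f_pos_of_lt_plen hf (Finset.mem_range.mp hi))
    _ ≤ _ := Finset.sum_le_sum_of_subset (Finset.range_subset_range.mpr (le_max_right _ _))

lemma head_le_psize (hg : IsPartition g) : g 0 ≤ psize g := by
  rcases Nat.eq_zero_or_pos (g 0) with h0 | h0
  · omega
  obtain ⟨N, hN⟩ := hg.2
  have hN1 : 1 ≤ N := by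
    by_contra hc
    have := hN 0 (by omega)
    omega
  have hsupp : Function.support g ⊆ ↑(Finset.range N) := by
    intro i hi
    simp only [Function.mem_support] at hi
    simp only [Finset.coe_range, Set.mem_Iio]
    by_contra hc
    exact hi (hN i (by omega))
  rw [psize, finsum_eq_sum_of_support_subset g hsupp]
  exact Finset.single_le_sum (f := g) (fun i _ => Nat.zero_le _)
    (Finset.mem_range.mpr (by omega))

lemma hdownOf_add (hf : IsPartition f) (hg : IsPartition g) {m : ℕ}
    (hm : plen f + g 0 ≤ m) (d : ℕ) :
    hdownOf f g m = hdownOf f g (m + d) := by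
  induction d with
  | zero => rfl
  | succ d ih =>
    rw [ih, show m + (d + 1) = (m + d) + 1 by omega]
    exact hdownOf_step hf hg (by omega)

end Glue

/-- **Stability of the hook product `h↓`** (Lemma in Appendix C).
If `λ`, `μ` are partitions and `m₁, m₂ ≥ |λ| + |μ|`, then `h↓(m₁) = h↓(m₂)`:
the hook product `h↓_Λ(q,t)` does not depend on `m` in the stable sector. -/
theorem hdown_stable (f g : ℕ → ℕ) (hf : IsPartition f) (hg : IsPartition g)
    (m₁ m₂ : ℕ) (h₁ : psize f + psize g ≤ m₁) (h₂ : psize f + psize g ≤ m₂) :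
    hdownOf f g m₁ = hdownOf f g m₂ := by
  have hb : plen f + g 0 ≤ psize f + psize g :=
    Nat.add_le_add (plen_le_psize hf) (head_le_psize hg)
  rcases le_total m₁ m₂ with h | h
  · obtain ⟨d, rfl⟩ := Nat.exists_eq_add_of_le h
    exact hdownOf_add hf hg (by omega) d
  · obtain ⟨d, rfl⟩ := Nat.exists_eq_add_of_le h
    exact (hdownOf_add hf hg (by omega) d).symm

end DoubleMacdonald
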